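/- Let u, s ∈ S^{m−1} ⊂ ℝ^m with ⟨u,s⟩ = 0, τ = u + is, τ† = −u + is. For (k,ℓ) ≠ (k',ℓ') in ℕ², ∫_{S^{m−1}} ∫_0^π conj(f_{τ,k,ℓ}(e^{iθ}ω)) · f_{τ,k',ℓ'}(e^{iθ}ω) dθ dS(ω) = 0, where f_{τ,k,ℓ}(z) = ⟨z,τ⟩^k⟨z,τ†⟩^ℓ. -/

import Mathlib

noncomputable section

open MeasureTheory Metric

/-- The bilinear pairing `⟨u,v⟩ = ∑_j u_j v_j` on `ℂ^m`. -/
def pairC {m : ℕ} (u v : Fin m → ℂ) : ℂ := ∑ j, u j * v j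

/-- `ℝ^m` with its Euclidean structure. -/
abbrev V (m : ℕ) := EuclideanSpace ℝ (Fin m)

/-- The real bilinear pairing `⟨x,y⟩ = ∑_j x_j y_j` on `ℝ^m`. -/
def pairR {m : ℕ} (x y : V m) : ℝ := ∑ j, x j * y j

/-- `τ = u + i s ∈ ℂ^m`, for real vectors `u, s`. -/
def tauP {m : ℕ} (u s : V m) : Fin m → ℂ := fun j => (u j : ℂ) + (s j : ℂ) * Complex.I

/-- `τ† = -u + i s ∈ ℂ^m`, for real vectors `u, s`. -/
def tauM {m : ℕ} (u s : V m) : Fin m → ℂ := fun j => -(u j : ℂ) + (s j : ℂ) * Complex.I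

/-- `e^{iθ} ω ∈ ℂ^m`, a point of the Lie sphere (for `ω ∈ S^{m-1}`). -/
def lvec {m : ℕ} (θ : ℝ) (ω : V m) : Fin m → ℂ :=
  fun j => Complex.exp (θ * Complex.I) * (ω j : ℂ)

/-- The surface measure `dS` on the unit sphere `S^{m-1} ⊂ ℝ^m`
(the total mass of this measure is the surface area `A_m`). -/
abbrev sphMeasure (m : ℕ) : Measure (sphere (0 : V m) 1) := (volume : Measure (V m)).toSphere

open scoped RealInnerProductSpace Pointwise
open Complex

/- ### auxiliary lemmas -/

lemma pairR_inner {m : ℕ} (x y : V m) : pairR x y = ⟪x, y⟫ := by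
  simp [pairR, PiLp.inner_apply, RCLike.inner_apply, conj_trivial]
  exact Finset.sum_congr rfl fun j _ => mul_comm _ _

lemma pairC_lvec {m : ℕ} (θ : ℝ) (ω : V m) (v : Fin m → ℂ) :
    pairC (lvec θ ω) v = Complex.exp (θ * Complex.I) * pairC (fun j => (ω j : ℂ)) v := by
  simp [pairC, lvec, Finset.mul_sum, mul_assoc]

lemma pairC_tauP {m : ℕ} (x u s : V m) :
    pairC (fun j => ((x j : ℝ) : ℂ)) (tauP u s)
      = (pairR x u : ℝ) + (pairR x s : ℝ) * Complex.I := by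
  simp only [pairC, tauP, pairR]
  push_cast
  rw [Finset.sum_mul, ← Finset.sum_add_distrib]
  exact Finset.sum_congr rfl fun j _ => by ring

lemma pairC_tauM {m : ℕ} (x u s : V m) :
    pairC (fun j => ((x j : ℝ) : ℂ)) (tauM u s)
      = -(pairR x u : ℝ) + (pairR x s : ℝ) * Complex.I := by
  simp only [pairC, tauM, pairR]
  push_cast
  rw [Finset.sum_mul, ← Finset.sum_neg_distrib, ← Finset.sum_add_distrib]
  exact Finset.sum_congr rfl fun j _ => by ring

/-- rotation by the matrix `[[C, -S],[S, C]]` in the plane spanned by `u, s`. -/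
def rotL {m : ℕ} (u s : V m) (C S : ℝ) : V m →ₗ[ℝ] V m where
  toFun x := x + (((C - 1) * ⟪u, x⟫ - S * ⟪s, x⟫) • u
      + (S * ⟪u, x⟫ + (C - 1) * ⟪s, x⟫) • s)
  map_add' x y := by
    simp only [inner_add_right]
    module
  map_smul' c x := by
    simp only [inner_smul_right, RingHom.id_apply]
    module

lemma rotL_inner {m : ℕ} (u s : V m) (C S : ℝ) (hCS : C ^ 2 + S ^ 2 = 1)
    (huu : ⟪u, u⟫ = 1) (hss : ⟪s, s⟫ = 1) (hus : ⟪u, s⟫ = 0) (x y : V m) :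
    ⟪rotL u s C S x, rotL u s C S y⟫ = ⟪x, y⟫ := by
  have hsu : ⟪s, u⟫ = 0 := by rw [real_inner_comm]; exact hus
  have hxu : ⟪x, u⟫ = ⟪u, x⟫ := real_inner_comm u x
  have hxs : ⟪x, s⟫ = ⟪s, x⟫ := real_inner_comm s x
  simp only [rotL, LinearMap.coe_mk, AddHom.coe_mk, inner_add_left, inner_add_right,
    real_inner_smul_left, real_inner_smul_right, huu, hss, hus, hsu, hxu, hxs]
  ring_nf
  linear_combination (⟪u, x⟫ * ⟪u, y⟫ + ⟪s, x⟫ * ⟪s, y⟫) * hCS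

/-- the rotation as a linear isometry equivalence. -/
def rotLI {m : ℕ} (u s : V m) (C S : ℝ) (hCS : C ^ 2 + S ^ 2 = 1)
    (huu : ⟪u, u⟫ = 1) (hss : ⟪s, s⟫ = 1) (hus : ⟪u, s⟫ = 0) :
    V m ≃ₗᵢ[ℝ] V m :=
  ((rotL u s C S).isometryOfInner (rotL_inner u s C S hCS huu hss hus)).toLinearIsometryEquiv rfl

lemma rotLI_apply {m : ℕ} (u s : V m) (C S : ℝ) (hCS : C ^ 2 + S ^ 2 = 1)
    (huu : ⟪u, u⟫ = 1) (hss : ⟪s, s⟫ = 1) (hus : ⟪u, s⟫ = 0) (x : V m) :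
    rotLI u s C S hCS huu hss hus x = x + (((C - 1) * ⟪u, x⟫ - S * ⟪s, x⟫) • u
      + (S * ⟪u, x⟫ + (C - 1) * ⟪s, x⟫) • s) := by
  simp [rotLI, LinearIsometry.coe_toLinearIsometryEquiv, LinearMap.coe_isometryOfInner, rotL]

/-- restriction of a linear isometry equivalence to the unit sphere. -/
def sphMap {m : ℕ} (f : V m ≃ₗᵢ[ℝ] V m) (ω : sphere (0 : V m) 1) : sphere (0 : V m) 1 :=
  ⟨f ω, by
    rw [mem_sphere_zero_iff_norm, f.norm_map, ← mem_sphere_zero_iff_norm]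
    exact ω.2⟩

lemma sphMap_continuous {m : ℕ} (f : V m ≃ₗᵢ[ℝ] V m) : Continuous (sphMap f) :=
  (f.continuous.comp continuous_subtype_val).subtype_mk _

lemma sphMap_measurePreserving {m : ℕ} (f : V m ≃ₗᵢ[ℝ] V m) :
    MeasurePreserving (sphMap f) (sphMeasure m) (sphMeasure m) := by
  refine ⟨(sphMap_continuous f).measurable, ?_⟩
  refine Measure.ext fun t ht => ?_
  have hpre : MeasurableSet (sphMap f ⁻¹' t) := (sphMap_continuous f).measurable ht
  rw [Measure.map_apply (sphMap_continuous f).measurable ht,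
    Measure.toSphere_apply' _ hpre, Measure.toSphere_apply' _ ht]
  congr 1
  have hset : (Set.Ioo (0:ℝ) 1 • (Subtype.val '' (sphMap f ⁻¹' t)))
      = f ⁻¹' (Set.Ioo (0:ℝ) 1 • (Subtype.val '' t)) := by
    ext x
    constructor
    · rintro ⟨r, hr, y, ⟨ω, hω, rfl⟩, rfl⟩
      refine ⟨r, hr, (sphMap f ω : V m), ⟨sphMap f ω, hω, rfl⟩, ?_⟩
      simp [sphMap, _root_.map_smul]
    · rintro ⟨r, hr, y, ⟨ω, hω, rfl⟩, hx⟩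
      refine ⟨r, hr, (sphMap f.symm ω : V m), ⟨sphMap f.symm ω, ?_, rfl⟩, ?_⟩
      · have h2 : sphMap f (sphMap f.symm ω) = ω := by
          ext; simp [sphMap]
        rw [Set.mem_preimage, h2]; exact hω
      · have h3 : x = f.symm (r • (ω : V m)) := by
          simp only at hx
          rw [hx]; simp
        rw [h3, _root_.map_smul]
        simp [sphMap]
  rw [hset,
    (f.measurePreserving).measure_preimage_emb f.toHomeomorph.measurableEmbedding]

lemma sphMap_measurableEmbedding {m : ℕ} (f : V m ≃ₗᵢ[ℝ] V m) :
    MeasurableEmbedding (sphMap f) := by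
  have hinj : Function.Injective (sphMap f) := fun a b h =>
    Subtype.ext (f.injective (congrArg Subtype.val h))
  exact ((sphMap_continuous f).isClosedEmbedding hinj).measurableEmbedding

/-- the key pure-ring identity -/
lemma ring_key (E1 E2 P0 Q0 : ℂ) (k l k' l' : ℕ) :
    (E2 * (-Q0)) ^ k * (E2 * (-P0)) ^ l * ((E1 * P0) ^ k' * (E1 * Q0) ^ l')
      = (E1 ^ (k' + l') * E2 ^ (k + l))
        * ((-1) ^ (k + l) * P0 ^ (l + k') * Q0 ^ (k + l')) := by
  ring


lemma conjE (θ : ℝ) : (starRingEnd ℂ) (Complex.exp ((θ:ℂ) * Complex.I))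
    = Complex.exp (-((θ:ℂ) * Complex.I)) := by
  rw [← Complex.exp_conj]
  congr 1
  simp [Complex.conj_I]

lemma conjP (A B : ℝ) : (starRingEnd ℂ) ((A:ℂ) + (B:ℂ) * Complex.I)
    = -(-(A:ℂ) + (B:ℂ) * Complex.I) := by
  simp [Complex.ext_iff]

lemma conjQ (A B : ℝ) : (starRingEnd ℂ) (-(A:ℂ) + (B:ℂ) * Complex.I)
    = -((A:ℂ) + (B:ℂ) * Complex.I) := by
  simp [Complex.ext_iff]

lemma pointwise_key {m : ℕ} (uv sv : V m) (θ : ℝ) (ω : V m) (k l k' l' : ℕ) :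
    (starRingEnd ℂ) (pairC (lvec θ ω) (tauP uv sv) ^ k * pairC (lvec θ ω) (tauM uv sv) ^ l) *
      (pairC (lvec θ ω) (tauP uv sv) ^ k' * pairC (lvec θ ω) (tauM uv sv) ^ l')
    = Complex.exp ((((k':ℂ) + (l':ℂ)) - ((k:ℂ) + (l:ℂ))) * ((θ:ℂ) * Complex.I)) *
        ((-1) ^ (k + l) * ((pairR ω uv : ℂ) + (pairR ω sv : ℂ) * Complex.I) ^ (l + k') *
          (-(pairR ω uv : ℂ) + (pairR ω sv : ℂ) * Complex.I) ^ (k + l')) := by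
  rw [pairC_lvec, pairC_lvec, pairC_tauP, pairC_tauM]
  simp only [map_mul, map_pow, conjE, conjP, conjQ]
  rw [ring_key]
  rw [← Complex.exp_nat_mul, ← Complex.exp_nat_mul, ← Complex.exp_add]
  push_cast
  ring_nf

lemma pairR_rot {m : ℕ} (uv sv : V m) (C S : ℝ) (hCS : C ^ 2 + S ^ 2 = 1)
    (huu : ⟪uv, uv⟫ = 1) (hss : ⟪sv, sv⟫ = 1) (hus : ⟪uv, sv⟫ = 0) (x : V m) :
    pairR (rotLI uv sv C S hCS huu hss hus x) uv = C * pairR x uv - S * pairR x sv ∧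
    pairR (rotLI uv sv C S hCS huu hss hus x) sv = S * pairR x uv + C * pairR x sv := by
  have hsu : ⟪sv, uv⟫ = 0 := by rw [real_inner_comm]; exact hus
  have h1 : ⟪uv, x⟫ = ⟪x, uv⟫ := real_inner_comm x uv
  have h2 : ⟪sv, x⟫ = ⟪x, sv⟫ := real_inner_comm x sv
  rw [rotLI_apply uv sv C S hCS huu hss hus x]
  constructor <;>
  · simp only [pairR_inner, inner_add_left, real_inner_smul_left, huu, hss, hus, hsu, h1, h2]
    ring
/-- Proposition 3.1, orthogonality of the functions `f_{τ,k,ℓ}`. -/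
theorem stmt3 (m : ℕ) (hm : 3 ≤ m)
    (u s : sphere (0 : V m) 1) (hus : pairR (u : V m) (s : V m) = 0)
    (k l k' l' : ℕ) (hne : (k, l) ≠ (k', l')) :
    (∫ ω : sphere (0 : V m) 1,
      (∫ θ in (0:ℝ)..Real.pi,
        (starRingEnd ℂ)
            (pairC (lvec θ ω) (tauP (u : V m) (s : V m)) ^ k * pairC (lvec θ ω) (tauM (u : V m) (s : V m)) ^ l) *
          (pairC (lvec θ ω) (tauP (u : V m) (s : V m)) ^ k' * pairC (lvec θ ω) (tauM (u : V m) (s : V m)) ^ l'))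
      ∂(sphMeasure m)) = 0 := by
  classical
  set uv : V m := (u : V m) with huv
  set sv : V m := (s : V m) with hsv
  have huu : ⟪uv, uv⟫ = 1 := by
    have h1 : ‖uv‖ = 1 := mem_sphere_zero_iff_norm.mp u.2
    rw [real_inner_self_eq_norm_mul_norm, h1]; norm_num
  have hss : ⟪sv, sv⟫ = 1 := by
    have h1 : ‖sv‖ = 1 := mem_sphere_zero_iff_norm.mp s.2
    rw [real_inner_self_eq_norm_mul_norm, h1]; norm_num
  have husI : ⟪uv, sv⟫ = 0 := by rw [← pairR_inner]; exact hus
  set nC : ℂ := (((k':ℂ) + (l':ℂ)) - ((k:ℂ) + (l:ℂ))) with hnC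
  set G : sphere (0 : V m) 1 → ℂ := fun ω =>
    (-1) ^ (k + l) * ((pairR (ω : V m) uv : ℂ) + (pairR (ω : V m) sv : ℂ) * Complex.I) ^ (l + k') *
      (-(pairR (ω : V m) uv : ℂ) + (pairR (ω : V m) sv : ℂ) * Complex.I) ^ (k + l') with hG
  set c : ℂ := ∫ θ in (0:ℝ)..Real.pi, Complex.exp (nC * ((θ:ℂ) * Complex.I)) with hc
  have hsplit : (∫ ω : sphere (0 : V m) 1,
      (∫ θ in (0:ℝ)..Real.pi,
        (starRingEnd ℂ)
            (pairC (lvec θ ω) (tauP uv sv) ^ k * pairC (lvec θ ω) (tauM uv sv) ^ l) *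
          (pairC (lvec θ ω) (tauP uv sv) ^ k' * pairC (lvec θ ω) (tauM uv sv) ^ l'))
      ∂(sphMeasure m)) = c * ∫ ω : sphere (0 : V m) 1, G ω ∂(sphMeasure m) := by
    have h1 : ∀ ω : sphere (0 : V m) 1,
        (∫ θ in (0:ℝ)..Real.pi,
          (starRingEnd ℂ)
              (pairC (lvec θ ω) (tauP uv sv) ^ k * pairC (lvec θ ω) (tauM uv sv) ^ l) *
            (pairC (lvec θ ω) (tauP uv sv) ^ k' * pairC (lvec θ ω) (tauM uv sv) ^ l'))
          = c * G ω := by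
      intro ω
      rw [hc, ← intervalIntegral.integral_mul_const]
      refine intervalIntegral.integral_congr fun θ _ => ?_
      exact pointwise_key uv sv θ (ω : V m) k l k' l'
    calc (∫ ω : sphere (0 : V m) 1,
        (∫ θ in (0:ℝ)..Real.pi,
          (starRingEnd ℂ)
              (pairC (lvec θ ω) (tauP uv sv) ^ k * pairC (lvec θ ω) (tauM uv sv) ^ l) *
            (pairC (lvec θ ω) (tauP uv sv) ^ k' * pairC (lvec θ ω) (tauM uv sv) ^ l'))
        ∂(sphMeasure m))
        = ∫ ω : sphere (0 : V m) 1, c * G ω ∂(sphMeasure m) := by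
          exact integral_congr_ae (Filter.Eventually.of_forall h1)
      _ = c * ∫ ω : sphere (0 : V m) 1, G ω ∂(sphMeasure m) := by
          simp only [← smul_eq_mul, integral_smul]
  rw [hsplit]
  set n : ℤ := ((k':ℤ) + (l':ℤ)) - ((k:ℤ) + (l:ℤ)) with hn
  have hnCn : nC = (n : ℂ) := by rw [hnC, hn]; push_cast; ring
  by_cases hpar : Even n ∧ n ≠ 0
  · -- the θ-integral vanishes
    obtain ⟨⟨t, ht⟩, hne0⟩ := hpar
    have hc0 : c = 0 := by
      have harg : ∀ θ : ℝ, nC * ((θ:ℂ) * Complex.I) = ((n:ℂ) * Complex.I) * (θ:ℂ) := by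
        intro θ; rw [hnCn]; ring
      have hni : ((n:ℂ) * Complex.I) ≠ 0 := by
        simp [Complex.I_ne_zero, hne0]
      rw [hc]
      rw [intervalIntegral.integral_congr (g := fun θ : ℝ => Complex.exp (((n:ℂ) * Complex.I) * (θ:ℂ)))
        (fun θ _ => by rw [harg θ])]
      rw [integral_exp_mul_complex hni]
      have h1 : Complex.exp ((n:ℂ) * Complex.I * (Real.pi : ℂ)) = 1 := by
        have h2 : (n:ℂ) * Complex.I * (Real.pi : ℂ) = (t:ℂ) * (2 * (Real.pi:ℂ) * Complex.I) := by
          have : (n:ℂ) = (t:ℂ) + (t:ℂ) := by rw [ht]; push_cast; ring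
          rw [this]; ring
        rw [h2, Complex.exp_int_mul_two_pi_mul_I]
      rw [h1]
      simp
    rw [hc0, zero_mul]
  · -- the sphere integral vanishes, via a rotation
    set d : ℤ := ((l:ℤ) + (k':ℤ)) - ((k:ℤ) + (l':ℤ)) with hd
    have hne' : ¬(k = k' ∧ l = l') := by simpa [Prod.ext_iff] using hne
    have hd0 : d ≠ 0 := by
      rcases Int.even_or_odd n with he | ho
      · have hn0 : n = 0 := by
          by_contra h; exact hpar ⟨he, h⟩
        intro hdz
        apply hne'
        constructor <;> omega
      · obtain ⟨t, ht⟩ := ho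
        intro hdz; omega
    have hdR : ((d:ℝ)) ≠ 0 := Int.cast_ne_zero.mpr hd0
    set φ : ℝ := Real.pi / (d:ℝ) with hφ
    have hCS : Real.cos φ ^ 2 + Real.sin φ ^ 2 = 1 := Real.cos_sq_add_sin_sq φ
    set f := rotLI uv sv (Real.cos φ) (Real.sin φ) hCS huu hss husI with hf
    have hexpP : Complex.exp ((φ:ℂ) * Complex.I)
        = (Real.cos φ : ℂ) + (Real.sin φ : ℂ) * Complex.I := by
      rw [Complex.exp_mul_I, Complex.ofReal_cos, Complex.ofReal_sin]
    have hexpM : Complex.exp (-((φ:ℂ) * Complex.I))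
        = (Real.cos φ : ℂ) - (Real.sin φ : ℂ) * Complex.I := by
      have h1 : -((φ:ℂ) * Complex.I) = ((-φ : ℝ) : ℂ) * Complex.I := by push_cast; ring
      rw [h1, Complex.exp_mul_I, Complex.ofReal_cos, Complex.ofReal_sin]
      push_cast
      rw [Complex.cos_neg, Complex.sin_neg]
      ring
    have hGf : ∀ ω : sphere (0 : V m) 1, G (sphMap f ω) = Complex.exp ((Real.pi:ℂ) * Complex.I) * G ω := by
      intro ω
      obtain ⟨hA, hB⟩ := pairR_rot uv sv (Real.cos φ) (Real.sin φ) hCS huu hss husI (ω : V m)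
      have hcoe : ((sphMap f ω : sphere (0 : V m) 1) : V m) = rotLI uv sv (Real.cos φ) (Real.sin φ) hCS huu hss husI (ω : V m) := rfl
      rw [hG]
      simp only [hcoe, hA, hB]
      set A : ℝ := pairR (ω : V m) uv
      set B : ℝ := pairR (ω : V m) sv
      have hP : ((Real.cos φ * A - Real.sin φ * B : ℝ) : ℂ) + ((Real.sin φ * A + Real.cos φ * B : ℝ) : ℂ) * Complex.I
          = Complex.exp ((φ:ℂ) * Complex.I) * ((A:ℂ) + (B:ℂ) * Complex.I) := by
        rw [hexpP]; push_cast
        linear_combination (-(Complex.sin (φ:ℂ)) * (B:ℂ)) * Complex.I_sq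
      have hQ : -((Real.cos φ * A - Real.sin φ * B : ℝ) : ℂ) + ((Real.sin φ * A + Real.cos φ * B : ℝ) : ℂ) * Complex.I
          = Complex.exp (-((φ:ℂ) * Complex.I)) * (-(A:ℂ) + (B:ℂ) * Complex.I) := by
        rw [hexpM]; push_cast
        linear_combination (Complex.sin (φ:ℂ) * (B:ℂ)) * Complex.I_sq
      rw [hP, hQ, mul_pow, mul_pow]
      have hmerge : Complex.exp (((l + k' : ℕ):ℂ) * ((φ:ℂ) * Complex.I)) *
          Complex.exp (((k + l' : ℕ):ℂ) * -((φ:ℂ) * Complex.I)) = Complex.exp ((Real.pi:ℂ) * Complex.I) := by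
        rw [← Complex.exp_add]
        congr 1
        have h5 : ((l + k' : ℕ):ℂ) * ((φ:ℂ) * Complex.I) + ((k + l' : ℕ):ℂ) * -((φ:ℂ) * Complex.I)
            = (((d:ℝ) * φ : ℝ) : ℂ) * Complex.I := by
          rw [hd]; push_cast; ring
        have h6 : (d:ℝ) * φ = Real.pi := by
          rw [hφ]; field_simp
        rw [h5, h6]
      calc (-1:ℂ) ^ (k + l) * (Complex.exp ((φ:ℂ) * Complex.I) ^ (l + k') * ((A:ℂ) + (B:ℂ) * Complex.I) ^ (l + k')) *
            (Complex.exp (-((φ:ℂ) * Complex.I)) ^ (k + l') * (-(A:ℂ) + (B:ℂ) * Complex.I) ^ (k + l'))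
          = (Complex.exp (((l + k' : ℕ):ℂ) * ((φ:ℂ) * Complex.I)) *
              Complex.exp (((k + l' : ℕ):ℂ) * -((φ:ℂ) * Complex.I))) *
            ((-1:ℂ) ^ (k + l) * ((A:ℂ) + (B:ℂ) * Complex.I) ^ (l + k') *
              (-(A:ℂ) + (B:ℂ) * Complex.I) ^ (k + l')) := by
            rw [Complex.exp_nat_mul, Complex.exp_nat_mul]; ring
        _ = Complex.exp ((Real.pi:ℂ) * Complex.I) *
            ((-1:ℂ) ^ (k + l) * ((A:ℂ) + (B:ℂ) * Complex.I) ^ (l + k') *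
              (-(A:ℂ) + (B:ℂ) * Complex.I) ^ (k + l')) := by rw [hmerge]
    have hJ : (∫ ω : sphere (0 : V m) 1, G ω ∂(sphMeasure m))
        = Complex.exp ((Real.pi:ℂ) * Complex.I) * ∫ ω : sphere (0 : V m) 1, G ω ∂(sphMeasure m) := by
      conv_lhs => rw [← (sphMap_measurePreserving f).integral_comp (sphMap_measurableEmbedding f) G]
      calc (∫ ω : sphere (0 : V m) 1, G (sphMap f ω) ∂(sphMeasure m))
          = ∫ ω : sphere (0 : V m) 1, Complex.exp ((Real.pi:ℂ) * Complex.I) * G ω ∂(sphMeasure m) := by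
            exact integral_congr_ae (Filter.Eventually.of_forall hGf)
        _ = Complex.exp ((Real.pi:ℂ) * Complex.I) * ∫ ω : sphere (0 : V m) 1, G ω ∂(sphMeasure m) := by
            simp only [← smul_eq_mul, integral_smul]
    rw [Complex.exp_pi_mul_I] at hJ
    have hJ0 : (∫ ω : sphere (0 : V m) 1, G ω ∂(sphMeasure m)) = 0 := by
      linear_combination (1/2 : ℂ) * hJ
    rw [hJ0, mul_zero]
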